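/- For all p, q ∈ 𝐆 and all α, β, γ ∈ ℕ there exists N ∈ ℕ such that for every j ≥ N there exist k₁ ∈ 𝐊[α] and k₂ ∈ 𝐊[γ] with p·Θ_j[β]·q = k₁·(p·Θ_N[β]·q)·k₂; that is, the sequence of double cosets 𝐊[α]·(p·Θ_j[β]·q)·𝐊[γ] is eventually constant in j. -/

import Mathlib

/-- Finite-support condition for a permutation. -/
def FinSupp (g : Equiv.Perm ℕ) : Prop := {x | g x ≠ x}.Finite

lemma finSupp_one : FinSupp 1 := by simp [FinSupp]

lemma finSupp_mul {a b : Equiv.Perm ℕ} (ha : FinSupp a) (hb : FinSupp b) :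
    FinSupp (a * b) := by
  refine Set.Finite.subset (ha.union hb) fun x hx => ?_
  simp only [Set.mem_setOf_eq, Equiv.Perm.mul_apply] at hx
  simp only [Set.mem_union, Set.mem_setOf_eq]
  by_cases h : b x = x
  · exact Or.inl (by simpa [h] using hx)
  · exact Or.inr h

lemma finSupp_inv {a : Equiv.Perm ℕ} (ha : FinSupp a) : FinSupp a⁻¹ := by
  refine Set.Finite.subset ha fun x hx => ?_
  simp only [Set.mem_setOf_eq] at hx ⊢
  intro h
  apply hx
  nth_rewrite 1 [← h]
  simp

lemma finSupp_conj {a : Equiv.Perm ℕ} (σ : Equiv.Perm ℕ) (ha : FinSupp a) :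
    FinSupp (σ * a * σ⁻¹) := by
  refine Set.Finite.subset (ha.image σ) fun x hx => ?_
  simp only [Set.mem_setOf_eq, Equiv.Perm.mul_apply] at hx
  refine ⟨σ⁻¹ x, ?_, by simp⟩
  simp only [Set.mem_setOf_eq]
  intro h
  apply hx
  rw [h]
  simp

/-- The bisymmetric group `𝐆`: pairs of permutations of `ℕ` whose ratio has finite
support. -/
def biSymm : Subgroup (Equiv.Perm ℕ × Equiv.Perm ℕ) where
  carrier := {g | FinSupp (g.1 * g.2⁻¹)}
  one_mem' := by simpa using finSupp_one
  mul_mem' := by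
    intro a b ha hb
    simp only [Set.mem_setOf_eq, Prod.fst_mul, Prod.snd_mul] at *
    have key : a.1 * b.1 * (a.2 * b.2)⁻¹ = (a.1 * (b.1 * b.2⁻¹) * a.1⁻¹) * (a.1 * a.2⁻¹) := by
      group
    rw [key]
    exact finSupp_mul (finSupp_conj _ hb) ha
  inv_mem' := by
    intro a ha
    simp only [Set.mem_setOf_eq, Prod.fst_inv, Prod.snd_inv] at *
    have key : a.1⁻¹ * (a.2⁻¹)⁻¹ = a.1⁻¹ * ((a.1 * a.2⁻¹)⁻¹) * a.1 := by group
    rw [key]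
    have := finSupp_conj a.1⁻¹ (finSupp_inv ha)
    simpa using this

/-- Membership in the subgroup `𝐊[α] ⊆ 𝐆`: diagonal pairs `(r, r)` with `r` fixing
every point `x < α`. -/
def InKbi (α : ℕ) (k : ↥biSymm) : Prop :=
  (k : Equiv.Perm ℕ × Equiv.Perm ℕ).1 = (k : Equiv.Perm ℕ × Equiv.Perm ℕ).2 ∧
    ∀ x < α, (k : Equiv.Perm ℕ × Equiv.Perm ℕ).1 x = x

/-- The permutation exchanging the blocks `[β, β+j)` and `[β+j, β+2j)`. -/
def thetaFun (β j : ℕ) (x : ℕ) : ℕ :=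
  if β ≤ x ∧ x < β + j then x + j
  else if β + j ≤ x ∧ x < β + 2 * j then x - j
  else x

lemma thetaFun_involutive (β j : ℕ) : Function.Involutive (thetaFun β j) := by
  intro x
  unfold thetaFun
  split_ifs <;> omega

/-- `θ_j[β]` as a permutation of `ℕ`. -/
def thetaPerm (β j : ℕ) : Equiv.Perm ℕ :=
  Function.Involutive.toPerm _ (thetaFun_involutive β j)

/-- `Θ_j[β] = (θ_j[β], θ_j[β])` as an element of the bisymmetric group. -/
def ThetaBi (β j : ℕ) : ↥biSymm :=
  ⟨(thetaPerm β j, thetaPerm β j), by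
    show FinSupp (thetaPerm β j * (thetaPerm β j)⁻¹)
    simpa using finSupp_one⟩

/-- Auxiliary rotation permutation: rotates the interval `[s, s+L+K)` by `K`. -/
def rotPerm (s L K : ℕ) : Equiv.Perm ℕ where
  toFun x := if s ≤ x ∧ x < s + L then x + K else if s + L ≤ x ∧ x < s + L + K then x - L else x
  invFun x := if s ≤ x ∧ x < s + K then x + L else if s + K ≤ x ∧ x < s + L + K then x - K else x
  left_inv x := by simp only; split_ifs <;> omega
  right_inv x := by simp only; split_ifs <;> omega

lemma rotPerm_apply (s L K x : ℕ) : rotPerm s L K x =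
    if s ≤ x ∧ x < s + L then x + K else if s + L ≤ x ∧ x < s + L + K then x - L else x := rfl

lemma rotPerm_inv_apply (s L K x : ℕ) : (rotPerm s L K)⁻¹ x =
    if s ≤ x ∧ x < s + K then x + L else if s + K ≤ x ∧ x < s + L + K then x - K else x := rfl

lemma thetaPerm_apply (β j x : ℕ) : thetaPerm β j x = thetaFun β j x := rfl

lemma thetaPerm_sq (β j : ℕ) : thetaPerm β j * thetaPerm β j = 1 := by
  ext x
  simp only [Equiv.Perm.mul_apply, Equiv.Perm.one_apply, thetaPerm_apply]
  exact thetaFun_involutive β j x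

/-- Permutations with "disjoint supports" (one supported below `M`, the other above)
commute. -/
lemma commute_of_fix {f g : Equiv.Perm ℕ} {M : ℕ} (hf : ∀ x, M ≤ x → f x = x)
    (hg : ∀ x, x < M → g x = x) : f * g = g * f := by
  have hf' : ∀ x, f x ≠ x → f x < M := by
    intro x hx
    by_contra h
    push_neg at h
    exact hx (f.injective (hf _ h))
  have hg' : ∀ x, g x ≠ x → M ≤ g x := by
    intro x hx
    by_contra h
    push_neg at h
    exact hx (g.injective (hg _ h))
  ext x
  simp only [Equiv.Perm.mul_apply]
  by_cases hx : x < M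
  · rw [hg x hx]
    by_cases hfx : f x = x
    · rw [hfx, hg x hx]
    · rw [hg _ (hf' x hfx)]
  · push_neg at hx
    rw [hf x hx]
    by_cases hgx : g x = x
    · rw [hgx, hf x hx]
    · rw [hf _ (hg' x hgx)]

lemma diag_mem_biSymm (r : Equiv.Perm ℕ) : (r, r) ∈ biSymm := by
  show FinSupp (r * r⁻¹)
  simpa using finSupp_one

/-- **Stabilization of double cosets in the bisymmetric group** (Lemma 1.1 of §1.6): for
`p, q ∈ 𝐆` and `α, β, γ`, the double cosets `𝐊[α]·(p·Θ_j[β]·q)·𝐊[γ]` are eventually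
constant in `j`. -/
theorem biSymm_double_coset_stabilizes (p q : ↥biSymm) (α β γ : ℕ) :
    ∃ N : ℕ, ∀ j ≥ N, ∃ k₁ k₂ : ↥biSymm, InKbi α k₁ ∧ InKbi γ k₂ ∧
      p * ThetaBi β j * q = k₁ * (p * ThetaBi β N * q) * k₂ := by
  obtain ⟨⟨p₁, p₂⟩, hp⟩ := p
  obtain ⟨⟨q₁, q₂⟩, hq⟩ := q
  have hp' : FinSupp (p₁ * p₂⁻¹) := hp
  have hq' : FinSupp (q₁ * q₂⁻¹) := hq
  -- the two finite-support "ratios"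
  set u : Equiv.Perm ℕ := p₂⁻¹ * p₁ with hu_def
  set w : Equiv.Perm ℕ := q₂ * q₁⁻¹ with hw_def
  have hu : FinSupp u := by
    have h := finSupp_conj p₂⁻¹ hp'
    have key : p₂⁻¹ * (p₁ * p₂⁻¹) * (p₂⁻¹)⁻¹ = u := by rw [hu_def]; group
    rwa [key] at h
  have hw : FinSupp w := by
    have h := finSupp_inv hq'
    have key : (q₁ * q₂⁻¹)⁻¹ = w := by rw [hw_def]; group
    rwa [key] at h
  -- choose a bound M beyond all the relevant finite data
  have hS : (({x | u x ≠ x} ∪ {x | w x ≠ x}) ∪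
      (⇑p₁⁻¹ '' Set.Iio α ∪ ⇑q₁ '' Set.Iio γ)).Finite :=
    ((hu.union hw).union (((Set.finite_Iio α).image _).union ((Set.finite_Iio γ).image _)))
  obtain ⟨b, hb⟩ := hS.bddAbove
  set M : ℕ := max β (b + 1) with hM_def
  have hβM : β ≤ M := le_max_left _ _
  have hbM : b < M := lt_of_lt_of_le (Nat.lt_succ_self b) (le_max_right _ _)
  have hu_fix : ∀ x, M ≤ x → u x = x := by
    intro x hx
    by_contra h
    exact absurd (hb (Or.inl (Or.inl h))) (by omega)
  have hw_fix : ∀ x, M ≤ x → w x = x := by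
    intro x hx
    by_contra h
    exact absurd (hb (Or.inl (Or.inr h))) (by omega)
  have hpα : ∀ x, x < α → p₁⁻¹ x < M := by
    intro x hx
    have := hb (Or.inr (Or.inl ⟨x, hx, rfl⟩))
    omega
  have hqγ : ∀ x, x < γ → q₁ x < M := by
    intro x hx
    have := hb (Or.inr (Or.inr ⟨x, hx, rfl⟩))
    omega
  refine ⟨M, fun j hj => ?_⟩
  -- the correcting permutations
  set c : Equiv.Perm ℕ := rotPerm (β + M) (M - β) (j - M) with hc_def
  set d : Equiv.Perm ℕ := thetaPerm β M * c⁻¹ * thetaPerm β j with hd_def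
  have hc_fix : ∀ x, x < M → c x = x := by
    intro x hx
    rw [hc_def, rotPerm_apply]
    split_ifs <;> omega
  have hd_fix : ∀ x, x < M → d x = x := by
    intro x hx
    rw [hd_def]
    simp only [Equiv.Perm.mul_apply, thetaPerm_apply, hc_def, rotPerm_inv_apply]
    unfold thetaFun
    split_ifs <;> omega
  have hc_theta : c * thetaPerm β M * d = thetaPerm β j := by
    rw [hd_def]
    calc c * thetaPerm β M * (thetaPerm β M * c⁻¹ * thetaPerm β j)
        = c * (thetaPerm β M * thetaPerm β M) * c⁻¹ * thetaPerm β j := by group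
      _ = thetaPerm β j := by rw [thetaPerm_sq]; group
  have hcu : u * c = c * u := commute_of_fix hu_fix hc_fix
  have hwd : w * d = d * w := commute_of_fix hw_fix hd_fix
  -- conjugation identities
  have h1 : p₁ * c * p₁⁻¹ = p₂ * c * p₂⁻¹ := by
    calc p₁ * c * p₁⁻¹ = p₂ * (u * c) * p₁⁻¹ := by rw [hu_def]; group
      _ = p₂ * (c * u) * p₁⁻¹ := by rw [hcu]
      _ = p₂ * c * p₂⁻¹ := by rw [hu_def]; group
  have h2 : q₁⁻¹ * d * q₁ = q₂⁻¹ * d * q₂ := by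
    calc q₁⁻¹ * d * q₁ = q₂⁻¹ * (w * d) * q₁ := by rw [hw_def]; group
      _ = q₂⁻¹ * (d * w) * q₁ := by rw [hwd]
      _ = q₂⁻¹ * d * q₂ := by rw [hw_def]; group
  refine ⟨⟨(p₁ * c * p₁⁻¹, p₁ * c * p₁⁻¹), diag_mem_biSymm _⟩,
    ⟨(q₁⁻¹ * d * q₁, q₁⁻¹ * d * q₁), diag_mem_biSymm _⟩, ⟨rfl, ?_⟩, ⟨rfl, ?_⟩, ?_⟩
  · intro x hx
    simp only [Equiv.Perm.mul_apply]
    rw [hc_fix _ (hpα x hx)]; exact p₁.apply_symm_apply x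
  · intro x hx
    simp only [Equiv.Perm.mul_apply]
    rw [hd_fix _ (hqγ x hx)]; exact q₁.symm_apply_apply x
  · apply Subtype.ext
    apply Prod.ext
    · show p₁ * thetaPerm β j * q₁ =
        (p₁ * c * p₁⁻¹) * (p₁ * thetaPerm β M * q₁) * (q₁⁻¹ * d * q₁)
      rw [← hc_theta]
      group
    · show p₂ * thetaPerm β j * q₂ =
        (p₁ * c * p₁⁻¹) * (p₂ * thetaPerm β M * q₂) * (q₁⁻¹ * d * q₁)
      rw [h1, h2, ← hc_theta]
      group
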